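/- A ring R is GWNC if and only if the Jacobson radical J(R) is nil and the quotient ring R/J(R) is GWNC. -/
import Mathlib
set_option maxHeartbeats 1000000


def IsWeaklyNilCleanElem {R : Type*} [Ring R] (a : R) : Prop :=
  ∃ e q : R, IsIdempotentElem e ∧ IsNilpotent q ∧ (a = q + e ∨ a = q - e)

def IsGWNCRing (R : Type*) [Ring R] : Prop :=
  ∀ a : R, ¬IsUnit a → IsWeaklyNilCleanElem a

section Aux

variable {R : Type*} [Ring R]

private lemma ker_mk' {x : R} :
    (⊥ : TwoSidedIdeal R).jacobson.ringCon.mk' x = 0 ↔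
      x ∈ (⊥ : TwoSidedIdeal R).jacobson := by
  rw [TwoSidedIdeal.mem_iff]
  exact RingCon.eq _

private lemma mk'_surj :
    Function.Surjective (⊥ : TwoSidedIdeal R).jacobson.ringCon.mk' := fun b =>
  Quotient.inductionOn' b fun a => ⟨a, rfl⟩

private lemma exists_left_inv_one_sub {x : R} (hx : x ∈ (⊥ : TwoSidedIdeal R).jacobson) :
    ∃ z : R, z * (1 - x) = 1 := by
  obtain ⟨z, hz⟩ := TwoSidedIdeal.mem_jacobson_iff.mp hx (-1)
  rw [TwoSidedIdeal.mem_bot, sub_eq_zero] at hz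
  have h1 : z * -1 * x = -(z * x) := by rw [mul_neg_one, neg_mul]
  rw [h1, neg_add_eq_sub] at hz
  exact ⟨z, by rw [mul_sub, mul_one]; exact hz⟩

private lemma eq_zero_of_idem_memJ {e : R} (he : IsIdempotentElem e)
    (hmem : e ∈ (⊥ : TwoSidedIdeal R).jacobson) : e = 0 := by
  obtain ⟨z, hz⟩ := exists_left_inv_one_sub hmem
  have h0 : (1 - e) * e = 0 := by
    rw [sub_mul, one_mul, he.eq, sub_self]
  calc e = (z * (1 - e)) * e := by rw [hz, one_mul]
    _ = z * ((1 - e) * e) := by rw [mul_assoc]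
    _ = 0 := by rw [h0, mul_zero]

end Aux

/-- `R` is GWNC iff the Jacobson radical `J(R)` is nil and `R/J(R)` is GWNC. -/
theorem isGWNC_iff_jacobson_nil_and_quotient_isGWNC {R : Type*} [Ring R] :
    IsGWNCRing R ↔
      (∀ x ∈ (⊥ : TwoSidedIdeal R).jacobson, IsNilpotent x) ∧
        IsGWNCRing (⊥ : TwoSidedIdeal R).jacobson.ringCon.Quotient := by
  set J := (⊥ : TwoSidedIdeal R).jacobson with hJ
  set π := J.ringCon.mk' with hπ
  constructor
  · intro h
    constructor
    · -- J is nil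
      intro x hx
      by_cases hu : IsUnit x
      · -- then the ring is trivial
        obtain ⟨z, hz⟩ := TwoSidedIdeal.mem_jacobson_iff.mp hx (-(↑hu.unit⁻¹ : R))
        rw [TwoSidedIdeal.mem_bot] at hz
        have hx1 : (↑hu.unit⁻¹ : R) * x = 1 := hu.val_inv_mul
        have h1 : z * -(↑hu.unit⁻¹ : R) * x = -z := by
          rw [mul_neg, neg_mul, mul_assoc, hx1, mul_one]
        rw [h1, neg_add_cancel, zero_sub, neg_eq_zero] at hz
        have := subsingleton_of_zero_eq_one hz.symm
        exact ⟨1, Subsingleton.elim _ _⟩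
      · obtain ⟨e, q, he, hq, hc⟩ := h x hu
        -- show e ∈ J hence e = 0
        have hπx : π x = 0 := ker_mk'.mpr hx
        have hπe : IsNilpotent (π e) := by
          rcases hc with hc | hc
          · have h2 : π q + π e = 0 := by rw [← map_add, ← hc, hπx]
            rw [eq_neg_of_add_eq_zero_right h2]; exact (hq.map π).neg
          · have h2 : π q - π e = 0 := by rw [← map_sub, ← hc, hπx]
            rw [← sub_eq_zero.mp h2]; exact hq.map π
        have heJ : e ∈ J := ker_mk'.mp ((he.map π).eq_zero_of_isNilpotent hπe)
        have he0 : e = 0 := eq_zero_of_idem_memJ he heJ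
        rcases hc with hc | hc
        · rw [he0, add_zero] at hc; rw [hc]; exact hq
        · rw [he0, sub_zero] at hc; rw [hc]; exact hq
    · -- quotient is GWNC
      intro b hb
      obtain ⟨a, rfl⟩ := mk'_surj b
      have ha : ¬IsUnit a := fun h' => hb (h'.map π)
      obtain ⟨e, q, he, hq, hc⟩ := h a ha
      exact ⟨π e, π q, he.map π, hq.map π, by
        rcases hc with hc | hc
        · exact Or.inl (by rw [hc, map_add])
        · exact Or.inr (by rw [hc, map_sub])⟩
  · rintro ⟨hnil, hq⟩ a ha
    have hker : ∀ x ∈ RingHom.ker π, IsNilpotent x := fun x hx =>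
      hnil x (ker_mk'.mp (RingHom.mem_ker.mp hx))
    -- a is not a unit in the quotient
    have hqa : ¬IsUnit (π a) := by
      intro hu
      apply ha
      obtain ⟨b, hb⟩ := mk'_surj (↑hu.unit⁻¹ : J.ringCon.Quotient)
      have hab : IsNilpotent (1 - a * b) := by
        apply hnil
        apply ker_mk'.mp
        rw [map_sub, map_one, map_mul, hb, hu.mul_val_inv, sub_self]
      have hba : IsNilpotent (1 - b * a) := by
        apply hnil
        apply ker_mk'.mp
        rw [map_sub, map_one, map_mul, hb, hu.val_inv_mul, sub_self]
      have hab' : IsUnit (a * b) := by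
        have := hab.isUnit_one_sub; rwa [sub_sub_cancel] at this
      have hba' : IsUnit (b * a) := by
        have := hba.isUnit_one_sub; rwa [sub_sub_cancel] at this
      -- a has a right inverse and a left inverse, hence is a unit
      obtain ⟨u, hu'⟩ := hab'
      obtain ⟨v, hv'⟩ := hba'
      have hr : a * (b * ↑u⁻¹) = 1 := by
        rw [← mul_assoc, ← hu', u.mul_inv]
      have hl : (↑v⁻¹ * b) * a = 1 := by
        rw [mul_assoc, ← hv', v.inv_mul]
      have heq : b * ↑u⁻¹ = ↑v⁻¹ * b := by
        calc b * ↑u⁻¹ = ((↑v⁻¹ * b) * a) * (b * ↑u⁻¹) := by rw [hl, one_mul]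
          _ = (↑v⁻¹ * b) * (a * (b * ↑u⁻¹)) := by simp [mul_assoc]
          _ = ↑v⁻¹ * b := by rw [hr, mul_one]
      exact ⟨⟨a, b * ↑u⁻¹, hr, by rw [heq, hl]⟩, rfl⟩
    obtain ⟨ebar, qbar, he, hqn, hc⟩ := hq (π a) hqa
    obtain ⟨e, he', hπe⟩ := exists_isIdempotentElem_eq_of_ker_isNilpotent π hker ebar
      (RingHom.mem_range.mpr (mk'_surj ebar)) he
    have nil_of_π_nil : ∀ x : R, IsNilpotent (π x) → IsNilpotent x := by
      rintro x ⟨n, hn⟩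
      have : (x ^ n) ∈ J := by
        apply ker_mk'.mp; rw [map_pow]; exact hn
      obtain ⟨m, hm⟩ := hnil _ this
      exact ⟨n * m, by rw [pow_mul]; exact hm⟩
    rcases hc with hc | hc
    · refine ⟨e, a - e, he', ?_, Or.inl (sub_add_cancel a e).symm⟩
      apply nil_of_π_nil
      rw [map_sub, hπe, hc, add_sub_cancel_right]
      exact hqn
    · refine ⟨e, a + e, he', ?_, Or.inr (add_sub_cancel_right a e).symm⟩
      apply nil_of_π_nil
      rw [map_add, hπe, hc, sub_add_cancel]
      exact hqn
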